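/- arXiv:1608.08449 — 5 statements merged into one kernel-verified Lean document; each statement's English description precedes it below -/
import Mathlib

section
/- Let E be a 2×2 complex matrix satisfying E² = (-A² - A⁻²)E for a nonzero complex number A, and let S = A·E + A⁻¹·I. Then for every positive integer m, Sᵐ = P_m(A)·E + A⁻ᵐ·I, where P_m(A) = A^{2-m}(1 - A⁴ + A⁸ - ... + (-1)^{m-1}A^{4m-4}). -/
theorem stmt_0 (A : ℂ) (hA : A ≠ 0) (E : Matrix (Fin 2) (Fin 2) ℂ)
    (hE : E * E = (-A ^ 2 - (A ^ 2)⁻¹) • E)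
    (S : Matrix (Fin 2) (Fin 2) ℂ) (hS : S = A • E + A⁻¹ • (1 : Matrix (Fin 2) (Fin 2) ℂ)) :
    ∀ m : ℕ, 1 ≤ m →
      S ^ m = (A ^ ((2 : ℤ) - m) * ∑ k ∈ Finset.range m, (-1 : ℂ) ^ k * A ^ (4 * k)) • E
        + (A ^ (-(m : ℤ))) • (1 : Matrix (Fin 2) (Fin 2) ℂ) := by
  intro m hm
  induction m, hm using Nat.le_induction with
  | base =>
      simp [hS, Finset.sum_range_one, zpow_sub₀ hA]
  | succ n hn ih =>
      rw [pow_succ, ih, hS]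
      simp only [add_mul, mul_add, smul_mul_assoc, mul_smul_comm, hE, smul_smul,
        one_mul, mul_one]
      have hsum : ∑ k ∈ Finset.range (n + 1), (-1 : ℂ) ^ k * A ^ (4 * k)
          = (-A ^ 4) * ∑ k ∈ Finset.range n, (-1 : ℂ) ^ k * A ^ (4 * k) + 1 := by
        rw [Finset.sum_range_succ', Finset.mul_sum]
        simp only [pow_zero, mul_zero, one_mul, mul_one]
        congr 1
        refine Finset.sum_congr rfl fun k _ => ?_
        ring
      rw [hsum]
      have hcast : (n : ℤ) + 1 = ((n + 1 : ℕ) : ℤ) := by push_cast; ring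
      have h1 : A ^ ((2 : ℤ) - (n : ℤ)) = A ^ 2 / A ^ n := by
        rw [zpow_sub₀ hA, zpow_natCast]; norm_cast
      have h2 : A ^ ((2 : ℤ) - ((n : ℤ) + 1)) = A ^ 2 / (A ^ n * A) := by
        rw [zpow_sub₀ hA, hcast, zpow_natCast, pow_succ]; norm_cast
      have h3 : A ^ (-((n : ℤ))) = 1 / A ^ n := by
        rw [zpow_neg, zpow_natCast]; simp
      have h4 : A ^ (-((n : ℤ) + 1)) = 1 / (A ^ n * A) := by
        rw [zpow_neg, hcast, zpow_natCast, pow_succ]; simp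
      have hAn : A ^ n ≠ 0 := pow_ne_zero _ hA
      match_scalars
      · rw [h1, h2, h3]
        field_simp
        ring
      · rw [h3, h4]
        field_simp
end

section
/- Let A be a nonzero complex number and let E be an element of a complex algebra with identity satisfying E² = (-A² - A⁻²)E. If P_m(A) = 0, where P_m(A) = A^{2-m}·∑_{k=0}^{m-1}(-1)^k A^{4k}, then (A·E + A⁻¹·1)ᵐ = A⁻ᵐ·1, i.e., the m-th power of A·E + A⁻¹ is a scalar. -/
theorem stmt_1 (A : ℂ) (hA : A ≠ 0) (R : Type*) [Ring R] [Algebra ℂ R] (E : R)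
    (hE : E * E = (-A ^ 2 - (A ^ 2)⁻¹) • E)
    (m : ℕ) (hm : 1 ≤ m)
    (hP : A ^ ((2 : ℤ) - m) * ∑ k ∈ Finset.range m, (-1 : ℂ) ^ k * A ^ (4 * k) = 0) :
    (A • E + algebraMap ℂ R A⁻¹) ^ m = algebraMap ℂ R (A⁻¹ ^ m) := by
  have hA2 : (A : ℂ) ^ 2 ≠ 0 := pow_ne_zero _ hA
  have hE2 : (A ^ 2 : ℂ) • (E * E) = (-A ^ 4 - 1) • E := by
    rw [hE, smul_smul]
    congr 1
    field_simp
  have key : ∀ n : ℕ,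
      ((A ^ 2 : ℂ) • E + 1) ^ (n + 1) =
      (A ^ 2 * ∑ k ∈ Finset.range (n + 1), (-1 : ℂ) ^ k * A ^ (4 * k)) • E + 1 := by
    intro n
    induction n with
    | zero => simp [Finset.sum_range_one]
    | succ n ih =>
        rw [pow_succ, ih]
        have hsum : ∑ k ∈ Finset.range (n + 1 + 1), (-1 : ℂ) ^ k * A ^ (4 * k)
            = 1 + (-A ^ 4) * ∑ k ∈ Finset.range (n + 1), (-1 : ℂ) ^ k * A ^ (4 * k) := by
          rw [Finset.sum_range_succ', Finset.mul_sum]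
          simp only [pow_zero, mul_one, Nat.mul_zero, one_mul]
          rw [add_comm]
          congr 1
          apply Finset.sum_congr rfl
          intro k _
          ring
        rw [hsum]
        set S := ∑ k ∈ Finset.range (n + 1), (-1 : ℂ) ^ k * A ^ (4 * k) with hS
        rw [add_mul, mul_add, mul_add, one_mul, mul_one, smul_mul_smul_comm]
        have : (A ^ 2 * S * A ^ 2 : ℂ) • (E * E) = (A ^ 2 * S) • ((A ^ 2 : ℂ) • (E * E)) := by
          rw [smul_smul]
        rw [this, hE2]
        simp only [one_mul, mul_one]
        match_scalars <;> ring
  obtain ⟨n, rfl⟩ : ∃ n, m = n + 1 := ⟨m - 1, (Nat.succ_pred_eq_of_pos hm).symm⟩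
  have hS0 : ∑ k ∈ Finset.range (n + 1), (-1 : ℂ) ^ k * A ^ (4 * k) = 0 := by
    rcases mul_eq_zero.mp hP with h | h
    · exact absurd h (zpow_ne_zero _ hA)
    · exact h
  have hAX : (A : ℂ) • (A • E + algebraMap ℂ R A⁻¹) = (A ^ 2 : ℂ) • E + 1 := by
    rw [smul_add, smul_smul, ← sq, Algebra.algebraMap_eq_smul_one, smul_smul,
      mul_inv_cancel₀ hA, one_smul]
  have hpow : (A ^ (n + 1) : ℂ) • (A • E + algebraMap ℂ R A⁻¹) ^ (n + 1) = 1 := by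
    rw [← smul_pow, hAX, key n, hS0, mul_zero, zero_smul, zero_add]
  calc (A • E + algebraMap ℂ R A⁻¹) ^ (n + 1)
      = (A⁻¹ ^ (n + 1) : ℂ) • ((A ^ (n + 1) : ℂ) • (A • E + algebraMap ℂ R A⁻¹) ^ (n + 1)) := by
        rw [smul_smul, ← mul_pow, inv_mul_cancel₀ hA, one_pow, one_smul]
    _ = algebraMap ℂ R (A⁻¹ ^ (n + 1)) := by
        rw [hpow, Algebra.algebraMap_eq_smul_one]
end

section
/- Let r ≥ 5 with r ∉ {6, 10}. Then there exists a primitive r-th root of unity q ∈ ℂ such that |2 - q - q⁻¹ + q² + q⁻²| > 2. -/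
open Real Complex

private lemma key_eq (θ : ℝ) :
    (2 : ℂ) - Complex.exp (θ * Complex.I) - (Complex.exp (θ * Complex.I))⁻¹
      + Complex.exp (θ * Complex.I) ^ 2 + (Complex.exp (θ * Complex.I) ^ 2)⁻¹
    = ((2 - 2 * Real.cos θ + 2 * Real.cos (2 * θ) : ℝ) : ℂ) := by
  have h1 : (Complex.exp (θ * Complex.I))⁻¹ = Complex.exp ((-θ : ℝ) * Complex.I) := by
    rw [← Complex.exp_neg]; congr 1; push_cast; ring
  have h2 : Complex.exp (θ * Complex.I) ^ 2 = Complex.exp ((2 * θ : ℝ) * Complex.I) := by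
    rw [← Complex.exp_nat_mul]; congr 1; push_cast; ring
  have h3 : (Complex.exp (θ * Complex.I) ^ 2)⁻¹ = Complex.exp ((-(2 * θ) : ℝ) * Complex.I) := by
    rw [h2, ← Complex.exp_neg]; congr 1; push_cast; ring
  rw [h1, h3, h2]
  simp only [Complex.exp_mul_I, ← Complex.ofReal_cos, ← Complex.ofReal_sin,
    Real.cos_neg, Real.sin_neg]
  push_cast
  ring

private lemma main_aux (r k : ℕ) (hr0 : 0 < r) (hcop : Nat.Coprime k r)
    (h3 : r < 3 * k) (h2 : 2 * k ≤ r) :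
    ∃ q : ℂ, IsPrimitiveRoot q r ∧
      2 < ‖2 - q - q⁻¹ + q ^ 2 + (q ^ 2)⁻¹‖ := by
  set θ : ℝ := 2 * Real.pi * k / r with hθ
  have hrR : (0 : ℝ) < (r : ℝ) := by exact_mod_cast hr0
  have hkR : (r : ℝ) < 3 * k := by exact_mod_cast h3
  have h2kR : 2 * (k : ℝ) ≤ r := by exact_mod_cast h2
  have hpi := Real.pi_pos
  refine ⟨Complex.exp (θ * Complex.I), ?_, ?_⟩
  · have := Complex.isPrimitiveRoot_exp_of_coprime k r hr0.ne' hcop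
    convert this using 2
    push_cast [hθ]
    ring
  · -- cosine bound
    have hlt : 2 * Real.pi / 3 < θ := by
      rw [hθ, div_lt_div_iff₀ (by norm_num) hrR]
      nlinarith
    have hle : θ ≤ Real.pi := by
      rw [hθ, div_le_iff₀ hrR]
      nlinarith
    have hcos : Real.cos θ < -(1/2) := by
      have h23 : Real.cos (2 * Real.pi / 3) = -(1/2) := by
        have : 2 * Real.pi / 3 = Real.pi - Real.pi / 3 := by ring
        rw [this, Real.cos_pi_sub, Real.cos_pi_div_three]
      calc Real.cos θ < Real.cos (2 * Real.pi / 3) :=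
            Real.cos_lt_cos_of_nonneg_of_le_pi (by positivity) hle hlt
        _ = -(1/2) := h23
    rw [key_eq θ, Complex.norm_real, Real.norm_eq_abs, Real.cos_two_mul]
    rw [lt_abs]
    left
    nlinarith [Real.cos_le_one θ, hcos]

theorem stmt_8 (r : ℕ) (hr : 5 ≤ r) (h6 : r ≠ 6) (h10 : r ≠ 10) :
    ∃ q : ℂ, IsPrimitiveRoot q r ∧
      2 < ‖2 - q - q⁻¹ + q ^ 2 + (q ^ 2)⁻¹‖ := by
  have hr0 : 0 < r := by omega
  rcases Nat.even_or_odd r with he | ho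
  · -- r even, r = 2m
    obtain ⟨m, hm⟩ := he
    rcases Nat.even_or_odd m with hme | hmo
    · -- m even, m ≥ 4, k = m - 1
      obtain ⟨t, ht⟩ := hme
      set k := m - 1 with hk
      have hkodd : Odd k := by rw [hk]; exact ⟨t - 1, by omega⟩
      have hcop : Nat.Coprime k r := by
        have h1 : Nat.Coprime k 2 := Nat.coprime_two_right.mpr hkodd
        have h2 : Nat.Coprime k (2 + k * 2) := by
          rw [Nat.coprime_add_mul_left_right]; exact h1
        have : r = 2 + k * 2 := by omega
        rwa [this]
      exact main_aux r k hr0 hcop (by omega) (by omega)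
    · -- m odd, m ≥ 7, k = m - 2
      have hm7 : 7 ≤ m := by
        obtain ⟨t, ht⟩ := hmo; omega
      set k := m - 2 with hk
      have hkodd : Odd k := by
        obtain ⟨t, ht⟩ := hmo; exact ⟨t - 1, by omega⟩
      have hcop : Nat.Coprime k r := by
        have h1 : Nat.Coprime k 2 := Nat.coprime_two_right.mpr hkodd
        have h4 : Nat.Coprime k 4 := by
          have := h1.pow_right 2
          norm_num at this
          exact this
        have h2 : Nat.Coprime k (4 + k * 2) := by
          rw [Nat.coprime_add_mul_left_right]; exact h4
        have : r = 4 + k * 2 := by omega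
        rwa [this]
      exact main_aux r k hr0 hcop (by omega) (by omega)
  · -- r odd, k = (r-1)/2
    obtain ⟨m, hm⟩ := ho
    set k := m with hk
    have hcop : Nat.Coprime k r := by
      have h1 : Nat.Coprime k (1 + k * 2) := by
        rw [Nat.coprime_add_mul_left_right]; exact Nat.coprime_one_right k
      have : r = 1 + k * 2 := by omega
      rwa [this]
    exact main_aux r k hr0 hcop (by omega) (by omega)
end

section
/- Let q be a primitive third root of unity. Then 2 - q - q⁻¹ + q² + q⁻² = 2, and the matrix M = [[2 - A⁴ - A⁻⁴ + A⁸, -A⁻² + A⁻⁶],[A⁻² - A⁻⁶, A⁻⁸]] with A⁴ = q is not the identity matrix; hence M has infinite order in PGL₂(ℂ). -/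
theorem stmt_11 (A : ℂ) (hA : A ≠ 0) (q : ℂ) (hq : q = A ^ 4)
    (hprim : IsPrimitiveRoot q 3)
    (M : Matrix (Fin 2) (Fin 2) ℂ)
    (hM : M = !![2 - A ^ 4 - (A ^ 4)⁻¹ + A ^ 8, -(A ^ 2)⁻¹ + (A ^ 6)⁻¹;
       (A ^ 2)⁻¹ - (A ^ 6)⁻¹, (A ^ 8)⁻¹]) :
    2 - q - q⁻¹ + q ^ 2 + (q ^ 2)⁻¹ = 2 ∧ M ≠ 1 ∧
    ∀ N : ℕ, 0 < N → ∀ c : ℂ, M ^ N ≠ c • (1 : Matrix (Fin 2) (Fin 2) ℂ) := by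
  have h3 : q ^ 3 = 1 := hprim.pow_eq_one
  have hq1 : q ≠ 1 := hprim.ne_one (by norm_num)
  have h12 : A ^ 12 = 1 := by rw [hq, ← pow_mul] at h3; norm_num at h3; exact h3
  have hqinv : q⁻¹ = q ^ 2 := inv_eq_of_mul_eq_one_right (by linear_combination h3)
  have hq2inv : (q ^ 2)⁻¹ = q := inv_eq_of_mul_eq_one_right (by linear_combination h3)
  have hi2 : (A ^ 2)⁻¹ = A ^ 10 := inv_eq_of_mul_eq_one_right (by linear_combination h12)
  have hi4 : (A ^ 4)⁻¹ = A ^ 8 := inv_eq_of_mul_eq_one_right (by linear_combination h12)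
  have hi6 : (A ^ 6)⁻¹ = A ^ 6 := inv_eq_of_mul_eq_one_right (by linear_combination h12)
  have hi8 : (A ^ 8)⁻¹ = A ^ 4 := inv_eq_of_mul_eq_one_right (by linear_combination h12)
  have hA4 : A ^ 4 ≠ 1 := by rw [← hq]; exact hq1
  have hM' : M = !![2 - A ^ 4, A ^ 6 - A ^ 10; A ^ 10 - A ^ 6, A ^ 4] := by
    rw [hM, hi2, hi4, hi6, hi8]
    ext i j
    fin_cases i <;> fin_cases j <;> simp <;> ring
  have h10 : A ^ 10 - A ^ 6 ≠ 0 := by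
    have : A ^ 10 - A ^ 6 = A ^ 6 * (A ^ 4 - 1) := by ring
    rw [this]
    exact mul_ne_zero (pow_ne_zero _ hA) (sub_ne_zero.mpr hA4)
  have hsq : (M - 1) * (M - 1) = 0 := by
    rw [hM']
    ext i j
    fin_cases i <;> fin_cases j <;>
      simp [Matrix.mul_apply, Fin.sum_univ_two, Matrix.one_apply]
    all_goals first
      | ring1
      | linear_combination (2 * A ^ 4 - A ^ 8 - 1) * h12
  have hpow : ∀ n : ℕ, M ^ n = 1 + (n : ℂ) • (M - 1) := by
    intro n
    induction n with
    | zero => simp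
    | succ n ih =>
      have e : (M - 1) * M = M - 1 := by
        have : (M - 1) * M = (M - 1) * (M - 1) + (M - 1) := by noncomm_ring
        rw [this, hsq, zero_add]
      rw [pow_succ, ih, add_mul, one_mul, smul_mul_assoc, e]
      push_cast
      module
  refine ⟨by rw [hqinv, hq2inv]; ring, ?_, ?_⟩
  · intro h
    have := congrFun (congrFun (hM' ▸ h) 1) 0
    simp [Matrix.one_apply] at this
    exact h10 (by linear_combination this)
  · intro n hn c hc
    rw [hpow n] at hc
    have h2 := congrFun (congrFun hc 1) 0
    simp [Matrix.one_apply, hM'] at h2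
    rcases h2 with h2 | h2
    · omega
    · exact h10 (by linear_combination h2)
end

section
/- Let A ∈ ℂ* and S₁ = [[-A³, A],[0,A⁻¹]], S₂ = [[A⁻¹, 0],[A, -A³]]. If q = A⁴ has multiplicative order r ≥ 3 with r ∉ {4,6,10}, then the image of S₁²S₂⁻² in PGL₂(ℂ) has infinite order, i.e., no positive power of S₁²S₂⁻² is a scalar matrix. -/
open Polynomial in
lemma transport (m : ℕ) (hm : 0 < m) (ζ : ℂ) (hζ : IsPrimitiveRoot ζ m) (u v k : ℕ)
    (hk : Nat.Coprime k m)
    (h : (ζ^v)^2*(ζ^u)^2 + (ζ^u)^2 + (ζ^v)*(ζ^u)^3 + ζ^v*ζ^u - ζ^v*(ζ^u)^4 - ζ^v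
        - 2*(ζ^v*(ζ^u)^2) = 0) :
    ((ζ^v)^k)^2*((ζ^u)^k)^2 + ((ζ^u)^k)^2 + ((ζ^v)^k)*((ζ^u)^k)^3 + (ζ^v)^k*(ζ^u)^k
      - (ζ^v)^k*((ζ^u)^k)^4 - (ζ^v)^k - 2*((ζ^v)^k*((ζ^u)^k)^2) = 0 := by
  set f : ℚ[X] := X^(2*v+2*u) + X^(2*u) + X^(v+3*u) + X^(v+u) - X^(v+4*u) - X^v
      - C 2 * X^(v+2*u) with hf
  have haev : aeval ζ f = 0 := by
    rw [hf]
    simp only [map_add, map_sub, map_mul, map_pow, aeval_X, aeval_C, map_ofNat]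
    linear_combination h
  have hdvd : minpoly ℚ ζ ∣ f := minpoly.dvd ℚ ζ haev
  have hmp : minpoly ℚ (ζ^k) = minpoly ℚ ζ := by
    rw [← cyclotomic_eq_minpoly_rat hζ hm,
        ← cyclotomic_eq_minpoly_rat (hζ.pow_of_coprime k hk) hm]
  have haev2 : aeval (ζ^k) f = 0 := by
    obtain ⟨g, hg⟩ := hdvd
    rw [hg, map_mul, ← hmp, minpoly.aeval, zero_mul]
  rw [hf] at haev2
  simp only [map_add, map_sub, map_mul, map_pow, aeval_X, aeval_C, map_ofNat] at haev2
  linear_combination haev2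

lemma abs_one_of_pow (z : ℂ) (n : ℕ) (hn : 0 < n) (h : z ^ n = 1) : ‖z‖ = 1 := by
  have h1 : ‖z‖ ^ n = 1 := by
    rw [← norm_pow, h, norm_one]
  rcases (pow_eq_one_iff_cases).mp h1 with h | h | h
  · omega
  · exact h
  · exfalso
    have := norm_nonneg z
    rw [h.1] at this; norm_num at this

lemma copr_aux (k r : ℕ) (hk : k % 2 = 1) (h4 : Nat.gcd k r ∣ 4) : Nat.Coprime k r := by
  obtain ⟨d, hd⟩ : ∃ d, Nat.gcd k r = d := ⟨_, rfl⟩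
  have d4 : d ∣ k := hd ▸ Nat.gcd_dvd_left _ _
  have dle : d ≤ 4 := Nat.le_of_dvd (by norm_num) (hd ▸ h4)
  have dpos : 0 < d := by
    rcases Nat.eq_zero_or_pos d with h | h
    · exfalso; rw [h, Nat.zero_dvd] at d4; omega
    · exact h
  unfold Nat.Coprime
  rw [hd]
  interval_cases d
  · rfl
  · exfalso; obtain ⟨c, hc⟩ := d4; omega
  · exfalso; obtain ⟨c, hc⟩ := hd ▸ h4; omega
  · exfalso; obtain ⟨c, hc⟩ := d4; omega

lemma numtheory (r : ℕ) (h5 : 5 ≤ r) (h6 : r ≠ 6) (h10 : r ≠ 10) :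
    ∃ k, Nat.Coprime k r ∧ r < 3*k ∧ 3*k < 2*r := by
  rcases Nat.mod_two_eq_zero_or_one r with he | ho
  case inr =>
    refine ⟨r/2, ?_, by omega, by omega⟩
    have h2 : 2*(r/2) = r - 1 := by omega
    have hd : Nat.gcd (r/2) r ∣ 1 := by
      have d1 : Nat.gcd (r/2) r ∣ r - 1 := by
        rw [← h2]; exact Dvd.dvd.mul_left (Nat.gcd_dvd_left _ _) 2
      have d2 : Nat.gcd (r/2) r ∣ r := Nat.gcd_dvd_right _ _
      have := Nat.dvd_sub d2 d1
      simpa [Nat.sub_sub_self (by omega : 1 ≤ r)] using this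
    exact Nat.eq_one_of_dvd_one hd
  case inl =>
    rcases Nat.mod_two_eq_zero_or_one (r/2) with he2 | ho2
    · refine ⟨r/2 - 1, ?_, by omega, by omega⟩
      have hk : (r/2 - 1) % 2 = 1 := by omega
      have h2 : 2*(r/2 - 1) = r - 2 := by omega
      refine copr_aux _ _ hk ?_
      have d1 : Nat.gcd (r/2-1) r ∣ r - 2 := by
        rw [← h2]; exact Dvd.dvd.mul_left (Nat.gcd_dvd_left _ _) 2
      have d2 : Nat.gcd (r/2-1) r ∣ r := Nat.gcd_dvd_right _ _
      have d3 := Nat.dvd_sub d2 d1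
      rw [Nat.sub_sub_self (by omega : 2 ≤ r)] at d3
      exact d3.mul_left 2
    · have hm7 : 7 ≤ r/2 := by omega
      refine ⟨r/2 - 2, ?_, by omega, by omega⟩
      have hk : (r/2 - 2) % 2 = 1 := by omega
      refine copr_aux _ _ hk ?_
      have d5 : Nat.gcd (r/2-2) r ∣ 2*(r/2-2) :=
        Dvd.dvd.mul_left (Nat.gcd_dvd_left _ _) 2
      have d2 : Nat.gcd (r/2-2) r ∣ r := Nat.gcd_dvd_right _ _
      have d3 := Nat.dvd_sub d2 d5
      have h4 : r - 2*(r/2-2) = 4 := by omega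
      rwa [h4] at d3

open Real in
lemma cos_small (r k : ℕ) (hr : 0 < r) (h1 : r < 3*k) (h2 : 3*k < 2*r) :
    Real.cos (2*π*k/r) < -(1/2) := by
  have hrpos : (0:ℝ) < r := by exact_mod_cast hr
  have hk1 : (r:ℝ) < 3*k := by exact_mod_cast h1
  have hk2 : (3:ℝ)*k < 2*r := by exact_mod_cast h2
  set θ : ℝ := 2*π*k/r with hθ
  have hpi := Real.pi_pos
  have hθ1 : 2*π/3 < θ := by
    rw [hθ, div_lt_div_iff₀ (by norm_num) hrpos]
    nlinarith
  have hθ2 : θ < 4*π/3 := by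
    rw [hθ, div_lt_div_iff₀ hrpos (by norm_num)]
    nlinarith
  have hval : Real.cos (2*π/3) = -(1/2) := by
    have : (2:ℝ)*π/3 = π - π/3 := by ring
    rw [this, Real.cos_pi_sub, Real.cos_pi_div_three]
  rcases le_or_gt θ π with hle | hgt
  · calc Real.cos θ < Real.cos (2*π/3) :=
          Real.cos_lt_cos_of_nonneg_of_le_pi (by positivity) hle hθ1
      _ = -(1/2) := hval
  · have heq : Real.cos θ = Real.cos (2*π - θ) := (Real.cos_two_pi_sub θ).symm
    rw [heq]
    calc Real.cos (2*π - θ) < Real.cos (2*π/3) := by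
          apply Real.cos_lt_cos_of_nonneg_of_le_pi
          · nlinarith
          · nlinarith
          · nlinarith
      _ = -(1/2) := hval

lemma exp_add_inv (t : ℝ) :
    Complex.exp (t * Complex.I) + (Complex.exp (t * Complex.I))⁻¹
      = 2 * (Real.cos t : ℂ) := by
  rw [← Complex.exp_neg, Complex.ofReal_cos, Complex.two_cos, neg_mul]

lemma pow_mod_eq (q : ℂ) (r a : ℕ) (h : q ^ r = 1) : q ^ a = q ^ (a % r) := by
  conv_lhs => rw [← Nat.mod_add_div a r]
  rw [pow_add, pow_mul, h, one_pow, mul_one]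

lemma final (q : ℂ) (r : ℕ) (hq : orderOf q = r) (hr3 : 3 ≤ r) (hr4 : r ≠ 4)
    (h6 : r ≠ 6) (h10 : r ≠ 10) (l : ℂ) (hl0 : l ≠ 0) (N : ℕ) (hN : 0 < N)
    (hl2N : l ^ (2*N) = 1) (hl2 : l ^ 2 ≠ 1)
    (ht : l + l⁻¹ = q^2 + (q^2)⁻¹ - q - q⁻¹ + 2) : False := by
  have hqr : q ^ r = 1 := hq ▸ pow_orderOf_eq_one q
  have hq0 : q ≠ 0 := by
    intro h; rw [h, zero_pow (by omega : r ≠ 0)] at hqr; exact zero_ne_one hqr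
  rcases eq_or_ne r 3 with h3 | hne3
  · -- r = 3 : RHS = 2, so l = 1, contradiction
    subst h3
    have hq2 : q⁻¹ = q^2 :=
      (eq_inv_of_mul_eq_one_left (by linear_combination hqr : q^2 * q = 1)).symm
    have hq22 : (q^2)⁻¹ = q :=
      (eq_inv_of_mul_eq_one_left (by linear_combination hqr : q * q^2 = 1)).symm
    rw [hq2, hq22] at ht
    have ht2 : l + l⁻¹ = 2 := by rw [ht]; ring
    have hsq : (l - 1)^2 = 0 := by
      field_simp at ht2
      linear_combination ht2
    have hl1 : l = 1 := by
      have := pow_eq_zero_iff (n := 2) (by norm_num) |>.mp hsq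
      exact sub_eq_zero.mp this
    exact hl2 (by rw [hl1]; norm_num)
  · -- main case : r ≥ 5
    have hr5 : 5 ≤ r := by omega
    obtain ⟨k₀, hk₀c, hk₀1, hk₀2⟩ := numtheory r hr5 h6 h10
    haveI : NeZero r := ⟨by omega⟩
    -- w : the chosen primitive r-th root with small real part
    set w : ℂ := Complex.exp (2*Real.pi*Complex.I*(k₀/r)) with hw
    have hwprim : IsPrimitiveRoot w r :=
      Complex.isPrimitiveRoot_exp_of_coprime k₀ r (by omega) hk₀c
    have hqprim : IsPrimitiveRoot q r := by
      rw [← hq]; exact IsPrimitiveRoot.orderOf q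
    obtain ⟨j, hjr, hj⟩ := hqprim.eq_pow_of_pow_eq_one hwprim.pow_eq_one
    have hjc : Nat.Coprime j r := by
      have := (hqprim.pow_iff_coprime (by omega) j).mp (hj ▸ hwprim)
      exact this
    -- CRT : find k coprime to m := 2*N*r with k ≡ j [MOD r]
    set m : ℕ := 2*N*r with hm
    have hrm : r ∣ m := ⟨2*N, by rw [hm]; ring⟩
    haveI : NeZero m := ⟨by positivity⟩
    obtain ⟨U, hU⟩ := ZMod.unitsMap_surjective hrm (ZMod.unitOfCoprime j hjc)
    set k : ℕ := (U : ZMod m).val with hkdef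
    have hkm : Nat.Coprime k m := ZMod.val_coe_unit_coprime U
    have hkj : k ≡ j [MOD r] := by
      have h1 : ((k : ℕ) : ZMod r) = ((j : ℕ) : ZMod r) := by
        have h2 := congrArg (fun (u : (ZMod r)ˣ) => (u : ZMod r)) hU
        simp only [ZMod.unitsMap_def, Units.coe_map, MonoidHom.coe_coe,
          ZMod.coe_unitOfCoprime] at h2
        rw [hkdef, ZMod.natCast_val]
        exact h2
      exact (ZMod.natCast_eq_natCast_iff _ _ _).mp h1
    have hqk : q ^ k = w := by
      rw [← hj, pow_mod_eq q r k hqr, pow_mod_eq q r j hqr, hkj]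
    -- the primitive m-th root and discrete logs
    set ζ : ℂ := Complex.exp (2*Real.pi*Complex.I/m) with hζdef
    have hζ : IsPrimitiveRoot ζ m := Complex.isPrimitiveRoot_exp m (by positivity)
    have hqm : q ^ m = 1 := by
      rw [hm, mul_comm, pow_mul, hqr, one_pow]
    have hlm : l ^ m = 1 := by
      rw [hm, pow_mul, hl2N, one_pow]
    obtain ⟨u, hur, hu⟩ := hζ.eq_pow_of_pow_eq_one hqm
    obtain ⟨v, hvr, hv⟩ := hζ.eq_pow_of_pow_eq_one hlm
    -- base relation
    have hE1 : l * l⁻¹ = 1 := mul_inv_cancel₀ hl0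
    have hE2 : q * q⁻¹ = 1 := mul_inv_cancel₀ hq0
    have hE3 : q^2 * (q^2)⁻¹ = 1 := mul_inv_cancel₀ (pow_ne_zero 2 hq0)
    have hbase : (ζ^v)^2*(ζ^u)^2 + (ζ^u)^2 + (ζ^v)*(ζ^u)^3 + ζ^v*ζ^u - ζ^v*(ζ^u)^4 - ζ^v
        - 2*(ζ^v*(ζ^u)^2) = 0 := by
      rw [hu, hv]
      linear_combination (l*q^2)*ht - q^2*hE1 + l*hE3 - (l*q)*hE2
    have hkey := transport m (by positivity) ζ hζ u v k hkm hbase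
    rw [hu, hv] at hkey
    rw [hqk] at hkey
    -- now : with L := l^k, relation L + L⁻¹ = w^2 + w⁻² - w - w⁻¹ + 2
    obtain ⟨L, hL⟩ : ∃ L : ℂ, L = l ^ k := ⟨_, rfl⟩
    rw [← hL] at hkey
    have hL0 : L ≠ 0 := by rw [hL]; exact pow_ne_zero _ hl0
    have hw0 : w ≠ 0 := Complex.exp_ne_zero _
    have htt : L + L⁻¹ = w^2 + (w^2)⁻¹ - w - w⁻¹ + 2 := by
      field_simp
      linear_combination hkey
    -- compute RHS as a real number
    set θ : ℝ := 2*Real.pi*k₀/r with hθ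
    have hwexp : w = Complex.exp (θ * Complex.I) := by
      rw [hw, hθ]
      congr 1
      push_cast
      field_simp
    have hw2 : w^2 = Complex.exp (((2*θ : ℝ)) * Complex.I) := by
      rw [hwexp, sq, ← Complex.exp_add]
      congr 1
      push_cast
      ring
    have hcos1 : w + w⁻¹ = 2 * (Real.cos θ : ℂ) := by
      rw [hwexp]; exact exp_add_inv θ
    have hcos2 : w^2 + (w^2)⁻¹ = 2 * (Real.cos (2*θ) : ℂ) := by
      rw [hw2]; exact exp_add_inv (2*θ)
    have hRHS : w^2 + (w^2)⁻¹ - w - w⁻¹ + 2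
        = ((2 * Real.cos (2*θ) - 2 * Real.cos θ + 2 : ℝ) : ℂ) := by
      rw [show w^2 + (w^2)⁻¹ - w - w⁻¹ + 2 = (w^2 + (w^2)⁻¹) - (w + w⁻¹) + 2 by ring,
        hcos1, hcos2]
      push_cast
      ring
    -- the real value exceeds 2
    have hcth : Real.cos θ < -(1/2) := by
      rw [hθ]; exact cos_small r k₀ (by omega) hk₀1 hk₀2
    have hgt : 2 < 2 * Real.cos (2*θ) - 2 * Real.cos θ + 2 := by
      rw [Real.cos_two_mul]
      nlinarith
    -- but |L + L⁻¹| ≤ 2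
    have habsL : ‖L‖ = 1 := by
      apply abs_one_of_pow L m (by positivity)
      rw [hL, ← pow_mul, mul_comm k m, pow_mul, hlm, one_pow]
    have hle : ‖L + L⁻¹‖ ≤ 2 := by
      calc ‖L + L⁻¹‖ ≤ ‖L‖ + ‖L⁻¹‖ :=
            norm_add_le _ _
        _ = 2 := by rw [norm_inv, habsL]; norm_num
    rw [htt, hRHS] at hle
    rw [Complex.norm_real, Real.norm_eq_abs] at hle
    have : |2 * Real.cos (2*θ) - 2 * Real.cos θ + 2| ≥ 2 * Real.cos (2*θ) - 2 * Real.cos θ + 2 :=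
      le_abs_self _
    linarith

lemma mat2_eq {a b c d e f g h : ℂ} (h1 : a = e) (h2 : b = f) (h3 : c = g) (h4 : d = h) :
    !![a,b;c,d] = (!![e,f;g,h] : Matrix (Fin 2) (Fin 2) ℂ) := by
  rw [h1, h2, h3, h4]

lemma smul_mat2 (x a b c d : ℂ) :
    x • (!![a,b;c,d] : Matrix (Fin 2) (Fin 2) ℂ) = !![x*a,x*b;x*c,x*d] := by
  ext i j
  fin_cases i <;> fin_cases j <;> simp

lemma sub_mat2 (a b c d e f g h : ℂ) :
    (!![a,b;c,d] : Matrix (Fin 2) (Fin 2) ℂ) - !![e,f;g,h] = !![a-e,b-f;c-g,d-h] := by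
  ext i j
  fin_cases i <;> fin_cases j <;> simp

lemma entry01 {a b c d e f g h : ℂ}
    (heq : !![a,b;c,d] = (!![e,f;g,h] : Matrix (Fin 2) (Fin 2) ℂ)) : b = f := by
  have := congr_fun (congr_fun heq 0) 1
  simpa using this

noncomputable def cheb (t : ℂ) : ℕ → ℂ
  | 0 => 0
  | 1 => 1
  | (n+2) => t * cheb t (n+1) - cheb t n

lemma cheb_pow (M : Matrix (Fin 2) (Fin 2) ℂ) (t : ℂ) (hCH : M * M = t • M - 1) :
    ∀ n : ℕ, M ^ (n+1) = cheb t (n+1) • M - cheb t n • 1 := by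
  intro n
  induction n with
  | zero => simp [cheb]
  | succ n ih =>
    rw [pow_succ, ih]
    have : (cheb t (n + 1) • M - cheb t n • 1) * M
        = cheb t (n+1) • (M * M) - cheb t n • M := by
      rw [sub_mul, smul_mul_assoc, smul_mul_assoc, one_mul]
    rw [this, hCH, show cheb t (n+1+1) = t * cheb t (n+1) - cheb t n from rfl]
    rw [smul_sub]
    rw [smul_smul]
    ext i j
    simp [Matrix.sub_apply, Matrix.smul_apply, Matrix.one_apply]
    ring
lemma cheb_lm (t l mu : ℂ) (hsum : l + mu = t) (hprod : l * mu = 1) :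
    ∀ n : ℕ, cheb t n * (l - mu) = l^n - mu^n := by
  intro n
  induction n using Nat.twoStepInduction with
  | zero => simp [cheb]
  | one => simp [cheb]
  | more n ih1 ih2 =>
    show (t * cheb t (n+1) - cheb t n) * (l - mu) = _
    rw [sub_mul, mul_assoc, ih1, ih2, ← hsum]
    linear_combination (l^n - mu^n) * hprod
lemma cheb_parab (t l : ℂ) (hsum : l + l = t) (hprod : l * l = 1) :
    ∀ n : ℕ, cheb t n = n * l^(n+1) := by
  intro n
  induction n using Nat.twoStepInduction with
  | zero => simp [cheb]
  | one => simp [cheb]; linear_combination -hprod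
  | more n ih1 ih2 =>
    show t * cheb t (n+1) - cheb t n = _
    rw [ih1, ih2, ← hsum]
    push_cast
    linear_combination ((n:ℂ) * l^(n+1)) * hprod

theorem stmt_17 (A : ℂ) (hA : A ≠ 0) (r : ℕ) (hr : orderOf (A ^ 4) = r)
    (hr3 : 3 ≤ r) (hrnot : r ∉ ({4, 6, 10} : Set ℕ)) :
    ∀ N : ℕ, 0 < N → ∀ c : ℂ,
      ((!![-A ^ 3, A; 0, A⁻¹] : Matrix (Fin 2) (Fin 2) ℂ) ^ 2 *
        ((!![A⁻¹, 0; A, -A ^ 3] : Matrix (Fin 2) (Fin 2) ℂ)⁻¹) ^ 2) ^ N ≠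
      c • (1 : Matrix (Fin 2) (Fin 2) ℂ) := by
  intro N hN c heq
  simp only [Set.mem_insert_iff, Set.mem_singleton_iff, not_or] at hrnot
  obtain ⟨h4, h6, h10⟩ := hrnot
  have hA4 : A ^ 4 ≠ 1 := by
    intro h
    rw [← hr, orderOf_eq_one_iff.mpr h] at hr3
    omega
  obtain ⟨B, hB⟩ : ∃ B : ℂ, A⁻¹ = B := ⟨_, rfl⟩
  have hBne : B ≠ 0 := by rw [← hB]; exact inv_ne_zero hA
  have hAB : A * B = 1 := by rw [← hB]; exact mul_inv_cancel₀ hA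
  rw [hB] at heq
  have hS2inv : (!![B, 0; A, -A ^ 3] : Matrix (Fin 2) (Fin 2) ℂ)⁻¹
      = !![A, 0; B, -B^3] := by
    apply Matrix.inv_eq_right_inv
    rw [Matrix.mul_fin_two, Matrix.one_fin_two]
    exact mat2_eq (by linear_combination hAB) (by ring)
      (by linear_combination ((-1:ℂ)*A^2) * hAB)
      (by linear_combination ((1:ℂ) + A*B + A^2*B^2) * hAB)
  have hM : (!![-A ^ 3, A; 0, B] : Matrix (Fin 2) (Fin 2) ℂ) ^ 2
        * (!![A, 0; B, -B^3] : Matrix (Fin 2) (Fin 2) ℂ) ^ 2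
      = !![A^8 - A^4 - B^4 + 2, (1 - A^4)*B^6; B^2 - B^6, B^8] := by
    rw [pow_two, pow_two, Matrix.mul_fin_two, Matrix.mul_fin_two, Matrix.mul_fin_two]
    exact mat2_eq
      (by linear_combination ((2:ℂ) + (-1:ℂ)*B^4 + (2:ℂ)*A*B + A^2*B^2 + A^3*B^3
            + (-1:ℂ)*A^4) * hAB)
      (by linear_combination (B^6) * hAB)
      (by linear_combination (B^2) * hAB)
      (by ring)
  rw [hS2inv, hM] at heq
  obtain ⟨t, ht_def⟩ : ∃ t : ℂ, t = A^8 - A^4 - B^4 + 2 + B^8 := ⟨_, rfl⟩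
  have hCH : (!![A^8 - A^4 - B^4 + 2, (1 - A^4)*B^6; B^2 - B^6, B^8]
          : Matrix (Fin 2) (Fin 2) ℂ) * !![A^8 - A^4 - B^4 + 2, (1 - A^4)*B^6; B^2 - B^6, B^8]
      = t • !![A^8 - A^4 - B^4 + 2, (1 - A^4)*B^6; B^2 - B^6, B^8] - 1 := by
    rw [ht_def, Matrix.mul_fin_two, Matrix.one_fin_two, smul_mat2, sub_mat2]
    exact mat2_eq
      (by linear_combination ((-1:ℂ) + B^8 + (-1:ℂ)*A*B + A*B^9 + (-1:ℂ)*A^2*B^2 + A^2*B^10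
            + (-1:ℂ)*A^3*B^3 + A^3*B^11 + (-1:ℂ)*A^4*B^4 + (-1:ℂ)*A^5*B^5 + (-1:ℂ)*A^6*B^6
            + (-1:ℂ)*A^7*B^7) * hAB)
      (by ring)
      (by ring)
      (by linear_combination ((-1:ℂ) + B^8 + (-1:ℂ)*A*B + A*B^9 + (-1:ℂ)*A^2*B^2 + A^2*B^10
            + (-1:ℂ)*A^3*B^3 + A^3*B^11 + (-1:ℂ)*A^4*B^4 + (-1:ℂ)*A^5*B^5 + (-1:ℂ)*A^6*B^6
            + (-1:ℂ)*A^7*B^7) * hAB)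
  obtain ⟨n, rfl⟩ : ∃ n, N = n + 1 := ⟨N - 1, by omega⟩
  have hpow := cheb_pow _ t hCH n
  rw [heq] at hpow
  rw [Matrix.one_fin_two, smul_mat2, smul_mat2, smul_mat2, sub_mat2] at hpow
  have h01 := entry01 hpow
  have hb : ((1 : ℂ) - A^4) * B^6 ≠ 0 :=
    mul_ne_zero (sub_ne_zero.mpr (Ne.symm hA4)) (pow_ne_zero _ hBne)
  have h01' : cheb t (n+1) * ((1 - A^4)*B^6) = 0 := by linear_combination -h01
  have hcheb : cheb t (n+1) = 0 := by
    rcases mul_eq_zero.mp h01' with h | h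
    · exact h
    · exact absurd h hb
  obtain ⟨s, hs⟩ := IsAlgClosed.exists_pow_nat_eq (t^2 - 4) (n := 2) (by norm_num)
  obtain ⟨l, hl⟩ : ∃ l : ℂ, l = (t + s)/2 := ⟨_, rfl⟩
  obtain ⟨mu, hmu⟩ : ∃ mu : ℂ, mu = (t - s)/2 := ⟨_, rfl⟩
  have hsum : l + mu = t := by rw [hl, hmu]; ring
  have hprod : l * mu = 1 := by
    rw [hl, hmu]
    linear_combination (-(1:ℂ)/4) * hs
  have hl0 : l ≠ 0 := by
    intro h; rw [h, zero_mul] at hprod; exact zero_ne_one hprod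
  rcases eq_or_ne l mu with heqlm | hnelm
  · -- parabolic case
    have hp := cheb_parab t l (by rw [← heqlm] at hsum; exact hsum)
      (by rw [← heqlm] at hprod; exact hprod) (n+1)
    rw [hcheb] at hp
    have hne : ((n:ℂ)+1) * l^(n+2) ≠ 0 := by
      apply mul_ne_zero
      · exact_mod_cast Nat.succ_ne_zero n
      · exact pow_ne_zero _ hl0
    apply hne
    push_cast at hp
    linear_combination -hp
  · have hml := cheb_lm t l mu hsum hprod (n+1)
    rw [hcheb, zero_mul] at hml
    have hpowseq : l^(n+1) = mu^(n+1) := by linear_combination -hml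
    have hinv : l⁻¹ = mu := inv_eq_of_mul_eq_one_right hprod
    have hl2N : l ^ (2*(n+1)) = 1 := by
      rw [two_mul, pow_add]
      nth_rewrite 2 [hpowseq]
      rw [← mul_pow, hprod, one_pow]
    have hl2ne : l^2 ≠ 1 := by
      intro h
      have hll : l⁻¹ = l := inv_eq_of_mul_eq_one_right (by linear_combination h)
      exact hnelm (by rw [← hinv, hll])
    have e8 : (A^4)^2 * B^8 = 1 := by
      linear_combination ((1:ℂ) + A*B + A^2*B^2 + A^3*B^3 + A^4*B^4 + A^5*B^5 + A^6*B^6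
        + A^7*B^7) * hAB
    have e4 : A^4 * B^4 = 1 := by
      linear_combination ((1:ℂ) + A*B + A^2*B^2 + A^3*B^3) * hAB
    have htfin : l + l⁻¹ = (A^4)^2 + ((A^4)^2)⁻¹ - A^4 - (A^4)⁻¹ + 2 := by
      rw [hinv, hsum, inv_eq_of_mul_eq_one_right e8, inv_eq_of_mul_eq_one_right e4, ht_def]
      ring
    exact final (A^4) r hr hr3 h4 h6 h10 l hl0 (n+1) (by omega) hl2N hl2ne htfin
end
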